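/- Let S be a finite singleton-rich semigroup in which the product of any two idempotents is idempotent. Then the relation ≪ (defined by s ≪ t iff s = s⁺ t s*) is transitive, hence a partial order on S. -/
import Mathlib


open scoped Classical

/-- φ*(s): the idempotent right identities of `s`. -/
def rIds {S : Type*} [Mul S] (s : S) : Set S := {e | e * e = e ∧ s * e = s}

/-- φ⁺(s): the idempotent left identities of `s`. -/
def lIds {S : Type*} [Mul S] (s : S) : Set S := {e | e * e = e ∧ e * s = s}

/-- `x` is the (necessarily unique) element of a singleton kernel (minimal ideal) of the
subsemigroup `T`: `{x}` is an ideal of `T`, hence the minimal ideal of `T`. -/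
def IsKer {S : Type*} [Semigroup S] (T : Subsemigroup S) (x : S) : Prop :=
  x ∈ T ∧ ∀ a ∈ T, a * x = x ∧ x * a = x

/-- The natural partial order on idempotents: `e ≤ f` iff `ef = fe = e`. -/
def nle {S : Type*} [Mul S] (e f : S) : Prop := e * f = e ∧ f * e = e

/-- The relation `≪`: `s ≪ t` iff `s = s⁺ t s*`, where `sa s = s*` and `pl s = s⁺`. -/
def ll {S : Type*} [Mul S] (sa pl : S → S) (s t : S) : Prop := s = pl s * t * sa s

section Aux
variable {S : Type*} [Semigroup S] {sa pl : S → S}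

theorem sa_rid {s : S} (h : IsKer (Subsemigroup.closure (rIds s)) (sa s)) :
    s * sa s = s := by
  have hle : Subsemigroup.closure (rIds s) ≤
      { carrier := {a | s * a = s},
        mul_mem' := fun {a b} ha hb => by
          simp only [Set.mem_setOf_eq] at *
          rw [← mul_assoc, ha, hb] } :=
    Subsemigroup.closure_le.mpr fun e he => he.2
  exact hle h.1

theorem pl_lid {s : S} (h : IsKer (Subsemigroup.closure (lIds s)) (pl s)) :
    pl s * s = s := by
  have hle : Subsemigroup.closure (lIds s) ≤
      { carrier := {a | a * s = s},
        mul_mem' := fun {a b} ha hb => by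
          simp only [Set.mem_setOf_eq] at *
          rw [mul_assoc, hb, ha] } :=
    Subsemigroup.closure_le.mpr fun e he => he.2
  exact hle h.1

theorem sa_abs {s e : S} (h : IsKer (Subsemigroup.closure (rIds s)) (sa s))
    (he : e * e = e) (hse : s * e = s) :
    e * sa s = sa s ∧ sa s * e = sa s :=
  h.2 e (Subsemigroup.subset_closure ⟨he, hse⟩)

theorem pl_abs {s e : S} (h : IsKer (Subsemigroup.closure (lIds s)) (pl s))
    (he : e * e = e) (hse : e * s = s) :
    e * pl s = pl s ∧ pl s * e = pl s :=
  h.2 e (Subsemigroup.subset_closure ⟨he, hse⟩)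

theorem sa_fix {e : S} (h : IsKer (Subsemigroup.closure (rIds e)) (sa e))
    (he : e * e = e) : sa e = e := by
  have h1 : e * sa e = e := sa_rid h
  have h2 : e * sa e = sa e := (sa_abs h he he).1
  rw [← h2, h1]

theorem pl_fix {e : S} (h : IsKer (Subsemigroup.closure (lIds e)) (pl e))
    (he : e * e = e) : pl e = e := by
  have h1 : pl e * e = e := pl_lid h
  have h2 : pl e * e = pl e := (pl_abs h he he).2
  rw [← h2, h1]

theorem twoSided_l (hpl : ∀ s : S, IsKer (Subsemigroup.closure (lIds s)) (pl s))
    {u v : S} (hu : u * u = u) (hv : v * v = v) (huv : u * v = v) : v * u = v := by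
  have := (pl_abs (hpl v) hu huv).2
  rwa [pl_fix (hpl v) hv] at this

theorem twoSided_r (hsa : ∀ s : S, IsKer (Subsemigroup.closure (rIds s)) (sa s))
    {u v : S} (hu : u * u = u) (hv : v * v = v) (huv : u * v = u) : v * u = u := by
  have := (sa_abs (hsa u) hv huv).1
  rwa [sa_fix (hsa u) hu] at this

/-- Main lemma: `s ≪ t` gives the four absorption identities. -/
theorem ll_key (hsa : ∀ s : S, IsKer (Subsemigroup.closure (rIds s)) (sa s))
    (hpl : ∀ s : S, IsKer (Subsemigroup.closure (lIds s)) (pl s))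
    (hE : ∀ e f : S, e * e = e → f * f = f → (e * f) * (e * f) = e * f)
    {s t : S} (hll : ll sa pl s t) :
    sa t * sa s = sa s ∧ sa s * sa t = sa s ∧
      pl s * pl t = pl s ∧ pl t * pl s = pl s := by
  set e := sa s with he'
  set f := sa t with hf'
  set p := pl s with hp'
  set q := pl t with hq'
  have hee : e * e = e := ((hsa s).2 _ (hsa s).1).1
  have hff : f * f = f := ((hsa t).2 _ (hsa t).1).1
  have hpp : p * p = p := ((hpl s).2 _ (hpl s).1).1
  have hqq : q * q = q := ((hpl t).2 _ (hpl t).1).1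
  have htf : t * f = t := sa_rid (hsa t)
  have hqt : q * t = t := pl_lid (hpl t)
  have hll' : s = p * t * e := hll
  -- fe : f * e = e
  have hfe_idem : (f * e) * (f * e) = f * e := hE f e hff hee
  have hs1 : s = (p * t) * (f * e) := by
    rw [hll']
    conv_lhs => rw [← htf]
    rw [← mul_assoc p t f, mul_assoc (p * t) f e]
  have hsfe : s * (f * e) = s := by
    conv_lhs => rw [hs1, mul_assoc, hfe_idem]
    exact hs1.symm
  have hfe : f * e = e := by
    have h1 : (f * e) * e = e := (sa_abs (hsa s) hfe_idem hsfe).1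
    rwa [mul_assoc, hee] at h1
  -- ef : e * f = e
  have hef_idem : (e * f) * (e * f) = e * f := hE e f hee hff
  have hek : e * (e * f) = e * f := by rw [← mul_assoc, hee]
  have hke : (e * f) * e = e * f := twoSided_l hpl hee hef_idem hek
  have hef : e * f = e := by rw [← hke, mul_assoc, hfe, hee]
  -- pq : p * q = p
  have hpq_idem : (p * q) * (p * q) = p * q := hE p q hpp hqq
  have hs2 : s = (p * q) * (t * e) := by
    rw [hll']
    conv_lhs => rw [← hqt]
    rw [← mul_assoc, mul_assoc (p * q) t e]
  have hpqs : (p * q) * s = s := by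
    conv_lhs => rw [hs2, ← mul_assoc, hpq_idem]
    exact hs2.symm
  have hpq : p * q = p := by
    have h1 : p * (p * q) = p := (pl_abs (hpl s) hpq_idem hpqs).2
    rwa [← mul_assoc, hpp] at h1
  -- qp : q * p = p
  have hqp_idem : (q * p) * (q * p) = q * p := hE q p hqq hpp
  have hqpp : (q * p) * p = q * p := by rw [mul_assoc, hpp]
  have hpqp : p * (q * p) = q * p := twoSided_r hsa hqp_idem hpp hqpp
  have hqp : q * p = p := by rw [← hpqp, ← mul_assoc, hpq, hpp]
  exact ⟨hfe, hef, hpq, hqp⟩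

end Aux

/-- If the product of any two idempotents of `S` is idempotent, then `≪` is transitive,
hence (being reflexive and antisymmetric) a partial order on `S`. -/
theorem stmt18 {S : Type*} [Semigroup S] [Fintype S] (sa pl : S → S)
    (hsa : ∀ s : S, IsKer (Subsemigroup.closure (rIds s)) (sa s))
    (hpl : ∀ s : S, IsKer (Subsemigroup.closure (lIds s)) (pl s))
    (hE : ∀ e f : S, e * e = e → f * f = f → (e * f) * (e * f) = e * f) :
    Transitive (ll sa pl) ∧ (∀ s : S, ll sa pl s s) ∧
      (∀ s t : S, ll sa pl s t → ll sa pl t s → s = t) := by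
  refine ⟨?_, ?_, ?_⟩
  · intro s t u hst htu
    obtain ⟨hfe, _, hpq, _⟩ := ll_key hsa hpl hE hst
    show s = pl s * u * sa s
    calc s = pl s * t * sa s := hst
    _ = pl s * (pl t * u * sa t) * sa s := by rw [← htu]
    _ = pl s * u * sa s := by
        rw [← mul_assoc (pl s) (pl t * u) (sa t), ← mul_assoc (pl s) (pl t) u, hpq,
          mul_assoc (pl s * u) (sa t) (sa s), hfe]
  · intro s
    show s = pl s * s * sa s
    rw [pl_lid (hpl s), sa_rid (hsa s)]
  · intro s t hst hts
    obtain ⟨hfe, hef, hpq, hqp⟩ := ll_key hsa hpl hE hst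
    obtain ⟨hfe', hef', hpq', hqp'⟩ := ll_key hsa hpl hE hts
    have hsat : sa s = sa t := by rw [← hef, hfe']
    have hplt : pl s = pl t := by rw [← hqp, hpq']
    have h1 : s = pl s * t * sa s := hst
    rw [hsat, hplt, pl_lid (hpl t), sa_rid (hsa t)] at h1
    exact h1
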